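/- Probabilistic null-space property: If U ⊆ ℝ^m is a nonempty set whose lower modified Minkowski dimension is strictly less than n, then for Lebesgue almost all matrices A ∈ ℝ^{n×m}, the kernel of A intersects U \ {0} in the empty set, i.e., ker(A) ∩ (U \ {0}) = ∅. -/

import Mathlib

open MeasureTheory Filter Set Metric Bornology Matrix Pointwise
noncomputable def coveringNumber {E : Type*} [PseudoMetricSpace E] (U : Set E) (ρ : ℝ) : ℕ :=
  sInf {k : ℕ | ∃ t : Finset E, t.card = k ∧ U ⊆ ⋃ x ∈ t, Metric.ball x ρ}

noncomputable def lowerMinkDim {E : Type*} [PseudoMetricSpace E] (U : Set E) : ℝ :=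
  liminf (fun ρ : ℝ => Real.log (coveringNumber U ρ) / Real.log (1 / ρ)) (nhdsWithin 0 (Set.Ioi 0))

noncomputable def upperMinkDim {E : Type*} [PseudoMetricSpace E] (U : Set E) : ℝ :=
  limsup (fun ρ : ℝ => Real.log (coveringNumber U ρ) / Real.log (1 / ρ)) (nhdsWithin 0 (Set.Ioi 0))

def IsDimCover {E : Type*} [PseudoMetricSpace E] [MeasurableSpace E] (U : Set E) (V : ℕ → Set E) : Prop :=
  (∀ i, (V i).Nonempty ∧ IsBounded (V i) ∧ MeasurableSet (V i)) ∧ U ⊆ ⋃ i, V i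

noncomputable def lowerModMinkDim {E : Type*} [PseudoMetricSpace E] [MeasurableSpace E] (U : Set E) : ℝ :=
  sInf {d : ℝ | ∃ V : ℕ → Set E, IsDimCover U V ∧ d = ⨆ i, lowerMinkDim (V i)}

noncomputable def upperModMinkDim {E : Type*} [PseudoMetricSpace E] [MeasurableSpace E] (U : Set E) : ℝ :=
  sInf {d : ℝ | ∃ V : ℕ → Set E, IsDimCover U V ∧ d = ⨆ i, upperMinkDim (V i)}
noncomputable def matVec {n m : ℕ} (A : Fin n → Fin m → ℝ) (x : EuclideanSpace ℝ (Fin m)) :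
    EuclideanSpace ℝ (Fin n) :=
  (EuclideanSpace.equiv (Fin n) ℝ).symm (Matrix.mulVec (Matrix.of A) (EuclideanSpace.equiv (Fin m) ℝ x))
open scoped ENNReal

/-! ### Auxiliary lemmas -/


lemma PNSP.det_row {m : ℕ} (x : Fin m → ℝ) (j0 : Fin m) :
    ((1 : Matrix (Fin m) (Fin m) ℝ).updateRow j0 x).det = x j0 := by
  have hx : x = ∑ k, x k • (1 : Matrix (Fin m) (Fin m) ℝ) k := by
    funext l; simp [Matrix.one_apply, Finset.sum_ite_eq]
  calc ((1 : Matrix (Fin m) (Fin m) ℝ).updateRow j0 x).det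
      = ((1 : Matrix (Fin m) (Fin m) ℝ).updateRow j0 (∑ k, x k • (1 : Matrix (Fin m) (Fin m) ℝ) k)).det := by rw [← hx]
    _ = x j0 • (1 : Matrix (Fin m) (Fin m) ℝ).det := Matrix.det_updateRow_sum _ _ _
    _ = x j0 := by simp

lemma PNSP.row_measure {m : ℕ} (x : Fin m → ℝ) (j0 : Fin m) (hx : x j0 ≠ 0) (ε R : ℝ) :
    volume {a : Fin m → ℝ | |∑ j, x j * a j| ≤ ε ∧ ∀ j, |a j| ≤ R}
      ≤ ENNReal.ofReal (|x j0|⁻¹) * (ENNReal.ofReal (2*ε) * ENNReal.ofReal (2*R) ^ (m - 1)) := by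
  set M : Matrix (Fin m) (Fin m) ℝ := (1 : Matrix (Fin m) (Fin m) ℝ).updateRow j0 x with hM
  have hdet : M.det = x j0 := PNSP.det_row x j0
  set f : (Fin m → ℝ) →ₗ[ℝ] (Fin m → ℝ) := Matrix.toLin' M with hf
  have hfdet : LinearMap.det f ≠ 0 := by
    rw [hf, LinearMap.det_toLin']
    rwa [hdet]
  set box : Set (Fin m → ℝ) := Set.pi Set.univ (fun j => if j = j0 then Set.Icc (-ε) ε else Set.Icc (-R) R) with hbox
  have hsub : {a : Fin m → ℝ | |∑ j, x j * a j| ≤ ε ∧ ∀ j, |a j| ≤ R} ⊆ f ⁻¹' box := by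
    intro a ha
    obtain ⟨h1, h2⟩ := ha
    intro j _
    have hfa : f a j = if j = j0 then ∑ k, x k * a k else a j := by
      simp only [hf, Matrix.toLin'_apply, Matrix.mulVec, dotProduct, hM]
      by_cases h : j = j0
      · subst h; simp [Matrix.updateRow_self]
      · simp [Matrix.updateRow_ne h, Matrix.one_apply, ite_mul, Finset.sum_ite_eq, if_neg h]
    by_cases h : j = j0
    · rw [hfa, if_pos h, h]
      simp only [if_pos rfl, Set.mem_Icc]
      exact abs_le.1 h1
    · rw [hfa, if_neg h]
      simp only [if_neg h, Set.mem_Icc]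
      exact abs_le.1 (h2 j)
  calc volume {a : Fin m → ℝ | |∑ j, x j * a j| ≤ ε ∧ ∀ j, |a j| ≤ R}
      ≤ volume (f ⁻¹' box) := measure_mono hsub
    _ = ENNReal.ofReal |(LinearMap.det f)⁻¹| * volume box := Measure.addHaar_preimage_linearMap volume hfdet box
    _ ≤ ENNReal.ofReal (|x j0|⁻¹) * (ENNReal.ofReal (2*ε) * ENNReal.ofReal (2*R) ^ (m - 1)) := by
        have hdf : LinearMap.det f = x j0 := by rw [hf, LinearMap.det_toLin', hdet]
        have hvol : volume box = ENNReal.ofReal (2*ε) * ENNReal.ofReal (2*R) ^ (m - 1) := by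
          rw [hbox, volume_pi_pi]
          have : ∀ j : Fin m, volume (if j = j0 then Set.Icc (-ε) ε else Set.Icc (-R) R)
              = if j = j0 then ENNReal.ofReal (2*ε) else ENNReal.ofReal (2*R) := by
            intro j; by_cases h : j = j0 <;>
              simp [h, Real.volume_Icc, two_mul, sub_neg_eq_add]
          rw [Finset.prod_congr rfl (fun j _ => this j)]
          rw [← Finset.mul_prod_erase Finset.univ _ (Finset.mem_univ j0), if_pos rfl]
          congr 1
          rw [Finset.prod_congr rfl (fun j hj => if_neg (Finset.ne_of_mem_erase hj)),
            Finset.prod_const, Finset.card_erase_of_mem (Finset.mem_univ j0), Finset.card_univ,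
            Fintype.card_fin]
        rw [hvol, hdf, abs_inv]

lemma PNSP.mat_measure {n m : ℕ} (x : Fin m → ℝ) (j0 : Fin m) (hx : x j0 ≠ 0) (ε R : ℝ) :
    volume {A : Fin n → Fin m → ℝ | ∀ i, |∑ j, x j * A i j| ≤ ε ∧ ∀ j, |A i j| ≤ R}
      ≤ (ENNReal.ofReal (|x j0|⁻¹) * (ENNReal.ofReal (2*ε) * ENNReal.ofReal (2*R) ^ (m - 1))) ^ n := by
  have hset : {A : Fin n → Fin m → ℝ | ∀ i, |∑ j, x j * A i j| ≤ ε ∧ ∀ j, |A i j| ≤ R}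
      = Set.pi Set.univ (fun _ : Fin n => {a : Fin m → ℝ | |∑ j, x j * a j| ≤ ε ∧ ∀ j, |a j| ≤ R}) := by
    ext A; simp [Set.mem_pi]
  rw [hset, volume_pi_pi]
  calc ∏ _i : Fin n, volume {a : Fin m → ℝ | |∑ j, x j * a j| ≤ ε ∧ ∀ j, |a j| ≤ R}
      ≤ ∏ _i : Fin n, (ENNReal.ofReal (|x j0|⁻¹) * (ENNReal.ofReal (2*ε) * ENNReal.ofReal (2*R) ^ (m - 1))) :=
        Finset.prod_le_prod' fun _ _ => PNSP.row_measure x j0 hx ε R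
    _ = _ := by rw [Finset.prod_const, Finset.card_univ, Fintype.card_fin]

lemma PNSP.coord_le_norm {m : ℕ} (y : EuclideanSpace ℝ (Fin m)) (j : Fin m) : |y j| ≤ ‖y‖ := by
  rw [EuclideanSpace.norm_eq]
  have h1 : |y j| = Real.sqrt (‖y j‖ ^ 2) := by
    rw [Real.sqrt_sq_eq_abs]; simp
  rw [h1]
  apply Real.sqrt_le_sqrt
  exact Finset.single_le_sum (f := fun k => ‖y k‖ ^ 2) (fun k _ => sq_nonneg _) (Finset.mem_univ j)

lemma PNSP.grid_cover {m : ℕ} {W : Set (EuclideanSpace ℝ (Fin m))} {r : ℝ} (hr : 0 ≤ r)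
    (hW : W ⊆ Metric.closedBall 0 r) {ρ : ℝ} (hρ : 0 < ρ) (hρ1 : ρ ≤ 1) :
    ∃ t : Finset (EuclideanSpace ℝ (Fin m)), (W ⊆ ⋃ x ∈ t, Metric.ball x ρ) ∧
      (t.card : ℝ) ≤ ((2*r*(Real.sqrt m + 1) + 5)/ρ)^m := by
  classical
  have hsqm : (0:ℝ) ≤ Real.sqrt m := Real.sqrt_nonneg _
  set s : ℝ := ρ / (Real.sqrt m + 1) with hs
  have hs0 : 0 < s := div_pos hρ (by linarith)
  set K : ℤ := ⌈r / s⌉ + 1 with hK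
  have hK1 : (1:ℤ) ≤ K := by
    have : (0:ℤ) ≤ ⌈r / s⌉ := Int.ceil_nonneg (by positivity)
    omega
  set p : (Fin m → ℤ) → EuclideanSpace ℝ (Fin m) :=
    fun c => (EuclideanSpace.equiv (Fin m) ℝ).symm (fun j => (c j : ℝ) * s) with hp
  refine ⟨(Fintype.piFinset (fun _ : Fin m => Finset.Icc (-K) K)).image p, ?_, ?_⟩
  · intro y hy
    have hyr : ∀ j, |y j| ≤ r := by
      intro j
      refine (PNSP.coord_le_norm y j).trans ?_
      have := hW hy
      rwa [Metric.mem_closedBall, dist_zero_right] at this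
    set c : Fin m → ℤ := fun j => round (y j / s) with hc
    have hclose : ∀ j, |y j - (c j : ℝ) * s| ≤ s / 2 := by
      intro j
      have h1 : |y j / s - (c j : ℝ)| ≤ 1/2 := abs_sub_round (y j / s)
      have h2 : y j - (c j : ℝ) * s = (y j / s - (c j : ℝ)) * s := by
        field_simp
      rw [h2, abs_mul, abs_of_pos hs0]
      calc |y j / s - (c j : ℝ)| * s ≤ (1/2) * s := by
            exact mul_le_mul_of_nonneg_right h1 hs0.le
        _ = s / 2 := by ring
    have hcK : ∀ j, c j ∈ Finset.Icc (-K) K := by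
      intro j
      have h1 : |(c j : ℝ)| ≤ |y j / s| + 1/2 := by
        have h2 := abs_sub_round (y j / s)
        have h3 : |(c j : ℝ)| - |y j / s| ≤ |(c j : ℝ) - y j / s| := abs_sub_abs_le_abs_sub _ _
        rw [abs_sub_comm] at h3
        simp only [hc] at h2 h3 ⊢
        linarith
      have h2 : |y j / s| ≤ r / s := by
        rw [abs_div, abs_of_pos hs0]
        gcongr
        exact hyr j
      have h4 : |(c j : ℝ)| ≤ (K : ℝ) := by
        calc |(c j : ℝ)| ≤ r / s + 1/2 := by linarith
          _ ≤ (⌈r / s⌉ : ℝ) + 1 := by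
              have := Int.le_ceil (r / s); linarith
          _ = (K : ℝ) := by rw [hK]; push_cast; ring
      have h4' := abs_le.1 h4
      rw [Finset.mem_Icc]
      constructor
      · exact_mod_cast h4'.1
      · exact_mod_cast h4'.2
    refine Set.mem_iUnion₂.2 ⟨p c, Finset.mem_image_of_mem p (Fintype.mem_piFinset.2 hcK), ?_⟩
    rw [Metric.mem_ball, EuclideanSpace.dist_eq]
    have hb : ∀ j, dist (y j) ((p c) j) ^ 2 ≤ (s/2)^2 := by
      intro j
      have : dist (y j) ((p c) j) = |y j - (c j : ℝ) * s| := by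
        simp [hp, Real.dist_eq]
      rw [this]
      exact pow_le_pow_left₀ (abs_nonneg _) (hclose j) 2
    calc Real.sqrt (∑ j, dist (y j) ((p c) j) ^ 2)
        ≤ Real.sqrt (∑ _j : Fin m, (s/2)^2) := Real.sqrt_le_sqrt (Finset.sum_le_sum fun j _ => hb j)
      _ = Real.sqrt (m * (s/2)^2) := by rw [Finset.sum_const, Finset.card_univ, Fintype.card_fin, nsmul_eq_mul]
      _ = Real.sqrt m * (s/2) := by
          rw [Real.sqrt_mul (by positivity), Real.sqrt_sq (by positivity)]
      _ < ρ := by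
          have h1 : Real.sqrt m * (s/2) < (Real.sqrt m + 1) * s := by nlinarith
          have h2 : (Real.sqrt m + 1) * s = ρ := by
            rw [hs]; field_simp
          linarith
  · calc ((Finset.image p (Fintype.piFinset fun _ : Fin m => Finset.Icc (-K) K)).card : ℝ)
        ≤ ((Fintype.piFinset fun _ : Fin m => Finset.Icc (-K) K).card : ℝ) := by
          exact_mod_cast Finset.card_image_le
    _ = ((2*K+1 : ℤ) : ℝ)^m := by
        rw [Fintype.card_piFinset]
        rw [Finset.prod_const, Finset.card_univ, Fintype.card_fin]
        have h6 : (Finset.Icc (-K) K).card = (2*K+1 : ℤ).toNat := by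
          rw [Int.card_Icc]; omega
        rw [h6]
        have h7 : (((2*K+1 : ℤ).toNat : ℤ)) = 2*K+1 := Int.toNat_of_nonneg (by omega)
        exact_mod_cast congrArg (fun z : ℤ => (z:ℝ)^m) h7
    _ ≤ ((2*r*(Real.sqrt m + 1) + 5)/ρ)^m := by
        apply pow_le_pow_left₀ (by positivity)
        have hKle : (K:ℝ) ≤ r/s + 2 := by
          have h := Int.ceil_lt_add_one (r/s)
          rw [hK]; push_cast; linarith
        have hrs : r / s = r * (Real.sqrt m + 1) / ρ := by
          rw [hs]; field_simp
        calc ((2*K+1 : ℤ) : ℝ) ≤ 2*(r/s+2)+1 := by push_cast; linarith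
          _ = 2*(r*(Real.sqrt m + 1))/ρ + 5 := by rw [hrs]; ring
          _ ≤ (2*r*(Real.sqrt m + 1) + 5)/ρ := by
              rw [div_add' _ _ _ (ne_of_gt hρ), div_le_div_iff_of_pos_right hρ]
              nlinarith
          _ = _ := rfl

lemma PNSP.log_nat_nonneg (k : ℕ) : 0 ≤ Real.log k := by
  cases k with
  | zero => simp
  | succ k => exact Real.log_nonneg (by exact_mod_cast Nat.one_le_iff_ne_zero.2 (Nat.succ_ne_zero k))

lemma PNSP.log_inv_pos {ρ : ℝ} (h0 : 0 < ρ) (h1 : ρ < 1) : 0 < Real.log (1/ρ) :=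
  Real.log_pos ((one_lt_div h0).2 h1)

lemma PNSP.f_nonneg {E : Type*} [PseudoMetricSpace E] (U : Set E) :
    ∀ᶠ ρ in nhdsWithin (0:ℝ) (Set.Ioi 0),
      0 ≤ Real.log (coveringNumber U ρ) / Real.log (1 / ρ) := by
  filter_upwards [Ioo_mem_nhdsGT_of_mem (by constructor <;> norm_num : (0:ℝ) ∈ Set.Ico 0 1)]
    with ρ hρ
  exact div_nonneg (PNSP.log_nat_nonneg _) (PNSP.log_inv_pos hρ.1 hρ.2).le

lemma PNSP.lowerMinkDim_nonneg {E : Type*} [PseudoMetricSpace E] (U : Set E) :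
    0 ≤ lowerMinkDim U := by
  rw [lowerMinkDim, liminf_eq]
  by_cases hb : BddAbove {a : ℝ | ∀ᶠ ρ in nhdsWithin (0:ℝ) (Set.Ioi 0),
      a ≤ Real.log (coveringNumber U ρ) / Real.log (1 / ρ)}
  · exact le_csSup hb (PNSP.f_nonneg U)
  · rw [Real.sSup_of_not_bddAbove hb]


lemma PNSP.lowerMinkDim_le_of_eventually {E : Type*} [PseudoMetricSpace E] (U : Set E) {M : ℝ}
    (hb : ∀ᶠ ρ in nhdsWithin (0:ℝ) (Set.Ioi 0),
      Real.log (coveringNumber U ρ) / Real.log (1 / ρ) ≤ M) :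
    lowerMinkDim U ≤ M := by
  rw [lowerMinkDim, liminf_eq]
  refine csSup_le ⟨0, PNSP.f_nonneg U⟩ ?_
  intro a ha
  have ha' : ∀ᶠ ρ in nhdsWithin (0:ℝ) (Set.Ioi 0),
      a ≤ Real.log (coveringNumber U ρ) / Real.log (1 / ρ) := ha
  obtain ⟨ρ, h1, h2⟩ := (ha'.and hb).exists
  linarith

lemma PNSP.frequently_lt {E : Type*} [PseudoMetricSpace E] (U : Set E) {M d' : ℝ}
    (hb : ∀ᶠ ρ in nhdsWithin (0:ℝ) (Set.Ioi 0),
      Real.log (coveringNumber U ρ) / Real.log (1 / ρ) ≤ M)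
    (h : lowerMinkDim U < d') :
    ∃ᶠ ρ in nhdsWithin (0:ℝ) (Set.Ioi 0),
      Real.log (coveringNumber U ρ) / Real.log (1 / ρ) < d' := by
  by_contra hcon
  rw [not_frequently] at hcon
  have hd' : d' ∈ {a : ℝ | ∀ᶠ ρ in nhdsWithin (0:ℝ) (Set.Ioi 0),
      a ≤ Real.log (coveringNumber U ρ) / Real.log (1 / ρ)} := by
    filter_upwards [hcon] with ρ hρ; linarith [not_lt.1 hρ]
  have hbdd : BddAbove {a : ℝ | ∀ᶠ ρ in nhdsWithin (0:ℝ) (Set.Ioi 0),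
      a ≤ Real.log (coveringNumber U ρ) / Real.log (1 / ρ)} := by
    refine ⟨M, fun a ha => ?_⟩
    have ha' : ∀ᶠ ρ in nhdsWithin (0:ℝ) (Set.Ioi 0),
        a ≤ Real.log (coveringNumber U ρ) / Real.log (1 / ρ) := ha
    obtain ⟨ρ, h1, h2⟩ := (ha'.and hb).exists
    linarith
  have : d' ≤ lowerMinkDim U := by
    rw [lowerMinkDim, liminf_eq]; exact le_csSup hbdd hd'
  linarith


lemma PNSP.exists_C {m : ℕ} {W : Set (EuclideanSpace ℝ (Fin m))} (hW : IsBounded W) :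
    ∃ C : ℝ, 1 ≤ C ∧ ∀ ρ : ℝ, 0 < ρ → ρ ≤ 1 →
      ({k : ℕ | ∃ t : Finset (EuclideanSpace ℝ (Fin m)), t.card = k ∧
          W ⊆ ⋃ x ∈ t, Metric.ball x ρ}.Nonempty ∧
        (coveringNumber W ρ : ℝ) ≤ (C/ρ)^m) := by
  obtain ⟨r, hr⟩ := hW.subset_closedBall 0
  have hr' : W ⊆ Metric.closedBall 0 (max r 0) :=
    hr.trans (Metric.closedBall_subset_closedBall (le_max_left _ _))
  set r' := max r 0
  have hr'0 : (0:ℝ) ≤ r' := le_max_right r 0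
  refine ⟨2*r'*(Real.sqrt m + 1) + 5, by nlinarith [Real.sqrt_nonneg (m:ℝ)], fun ρ hρ hρ1 => ?_⟩
  obtain ⟨t, ht1, ht2⟩ := PNSP.grid_cover (le_max_right r 0) hr' hρ hρ1
  have hmem : t.card ∈ {k : ℕ | ∃ t' : Finset (EuclideanSpace ℝ (Fin m)), t'.card = k ∧
      W ⊆ ⋃ x ∈ t', Metric.ball x ρ} := ⟨t, rfl, ht1⟩
  refine ⟨⟨t.card, hmem⟩, ?_⟩
  calc (coveringNumber W ρ : ℝ) ≤ (t.card : ℝ) := by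
        exact_mod_cast Nat.sInf_le hmem
    _ ≤ _ := ht2

lemma PNSP.eventual_f_le {m : ℕ} {W : Set (EuclideanSpace ℝ (Fin m))} (hW : IsBounded W) :
    ∀ᶠ ρ in nhdsWithin (0:ℝ) (Set.Ioi 0),
      Real.log (coveringNumber W ρ) / Real.log (1 / ρ) ≤ m + 1 := by
  obtain ⟨C, hC1, hC⟩ := PNSP.exists_C hW
  set ρ0 : ℝ := min (1/2) (Real.exp (-(m * Real.log C))) with hρ0
  have hρ0pos : 0 < ρ0 := lt_min (by norm_num) (Real.exp_pos _)
  filter_upwards [Ioo_mem_nhdsGT_of_mem (⟨le_refl 0, hρ0pos⟩ : (0:ℝ) ∈ Set.Ico 0 ρ0)]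
    with ρ hρ
  obtain ⟨hρpos, hρlt⟩ := hρ
  have hρ1 : ρ < 1 := lt_of_lt_of_le hρlt ((min_le_left _ _).trans (by norm_num))
  have hlogpos := PNSP.log_inv_pos hρpos hρ1
  -- key : m * log C ≤ log (1/ρ)
  have hkey : (m : ℝ) * Real.log C ≤ Real.log (1/ρ) := by
    have h1 : ρ ≤ Real.exp (-(m * Real.log C)) := (le_of_lt hρlt).trans (min_le_right _ _)
    have h2 : Real.log ρ ≤ -(m * Real.log C) := by
      calc Real.log ρ ≤ Real.log (Real.exp (-(m * Real.log C))) :=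
            Real.log_le_log hρpos h1
        _ = -(m * Real.log C) := Real.log_exp _
    rw [one_div, Real.log_inv]
    linarith
  -- log N ≤ m log C + m log (1/ρ)
  have hCρ : (1:ℝ) ≤ C / ρ := by
    rw [le_div_iff₀ hρpos]; nlinarith
  have hN : Real.log (coveringNumber W ρ) ≤ (m:ℝ) * Real.log C + (m:ℝ) * Real.log (1/ρ) := by
    have hb := (hC ρ hρpos hρ1.le).2
    have h3 : Real.log ((C/ρ)^m) = (m:ℝ) * Real.log C + (m:ℝ) * Real.log (1/ρ) := by
      rw [Real.log_pow, Real.log_div (by linarith) (ne_of_gt hρpos), one_div, Real.log_inv]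
      ring
    rcases Nat.eq_zero_or_pos (coveringNumber W ρ) with h | h
    · rw [h]
      simp only [Nat.cast_zero, Real.log_zero]
      rw [← h3]
      exact Real.log_nonneg (one_le_pow₀ hCρ)
    · rw [← h3]
      exact Real.log_le_log (by exact_mod_cast h) hb
  rw [div_le_iff₀ hlogpos]
  have hlogC : 0 ≤ Real.log C := Real.log_nonneg hC1
  calc Real.log (coveringNumber W ρ) ≤ (m:ℝ) * Real.log C + (m:ℝ) * Real.log (1/ρ) := hN
    _ ≤ Real.log (1/ρ) + (m:ℝ) * Real.log (1/ρ) := by linarith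
    _ = ((m:ℝ) + 1) * Real.log (1/ρ) := by ring

lemma PNSP.coveringNumber_mono {E : Type*} [PseudoMetricSpace E] {W V : Set E} (h : W ⊆ V) {ρ : ℝ}
    (hne : {k : ℕ | ∃ t : Finset E, t.card = k ∧ V ⊆ ⋃ x ∈ t, Metric.ball x ρ}.Nonempty) :
    coveringNumber W ρ ≤ coveringNumber V ρ := by
  have hmem := Nat.sInf_mem hne
  obtain ⟨t, ht1, ht2⟩ := hmem
  exact Nat.sInf_le ⟨t, ht1, h.trans ht2⟩

lemma PNSP.freq_bound {m : ℕ} {W V : Set (EuclideanSpace ℝ (Fin m))} (hWV : W ⊆ V)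
    (hV : IsBounded V) {d' : ℝ} (hd : lowerMinkDim V < d') :
    ∃ᶠ ρ in nhdsWithin (0:ℝ) (Set.Ioi 0),
      (0 < ρ ∧ ρ < 1 ∧ (coveringNumber W ρ : ℝ) ≤ ρ^(-d')) := by
  obtain ⟨C, hC1, hC⟩ := PNSP.exists_C hV
  have hfreq := PNSP.frequently_lt V (PNSP.eventual_f_le hV) hd
  have hev : ∀ᶠ ρ in nhdsWithin (0:ℝ) (Set.Ioi 0), ρ ∈ Set.Ioo (0:ℝ) 1 :=
    Ioo_mem_nhdsGT_of_mem (by constructor <;> norm_num)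
  refine (hfreq.and_eventually hev).mono ?_
  rintro ρ ⟨hflt, hρpos, hρ1⟩
  refine ⟨hρpos, hρ1, ?_⟩
  have hlogpos := PNSP.log_inv_pos hρpos hρ1
  have hNV : (coveringNumber W ρ : ℝ) ≤ (coveringNumber V ρ : ℝ) := by
    exact_mod_cast PNSP.coveringNumber_mono hWV (hC ρ hρpos hρ1.le).1
  have hlogW : Real.log (coveringNumber W ρ) ≤ Real.log (coveringNumber V ρ) := by
    rcases Nat.eq_zero_or_pos (coveringNumber W ρ) with h | h
    · rw [h]; simpa using PNSP.log_nat_nonneg (coveringNumber V ρ)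
    · exact Real.log_le_log (by exact_mod_cast h) hNV
  have hflt' : Real.log (coveringNumber W ρ) < d' * Real.log (1/ρ) := by
    have := (div_lt_iff₀ hlogpos).1 hflt
    linarith
  have hrw : d' * Real.log (1/ρ) = Real.log (ρ^(-d')) := by
    rw [Real.log_rpow hρpos, one_div, Real.log_inv]; ring
  rcases Nat.eq_zero_or_pos (coveringNumber W ρ) with h | h
  · rw [h]
    norm_num
    exact (Real.rpow_pos_of_pos hρpos _).le
  · have hWpos : (0:ℝ) < (coveringNumber W ρ : ℝ) := by exact_mod_cast h
    have := Real.exp_le_exp.2 (le_of_lt (hrw ▸ hflt'))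
    rwa [Real.exp_log hWpos, Real.exp_log (Real.rpow_pos_of_pos hρpos _)] at this

lemma PNSP.matVec_eq_zero_iff {n m : ℕ} (A : Fin n → Fin m → ℝ) (x : EuclideanSpace ℝ (Fin m)) :
    matVec A x = 0 ↔ ∀ i, ∑ j, A i j * x j = 0 := by
  unfold matVec
  rw [map_eq_zero_iff _ (EuclideanSpace.equiv (Fin n) ℝ).symm.injective]
  simp [funext_iff, Matrix.mulVec, dotProduct]


lemma PNSP.cs_bound {m : ℕ} (u : EuclideanSpace ℝ (Fin m)) (a : Fin m → ℝ) (L : ℝ) (hL : 0 ≤ L)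
    (ha : ∀ j, |a j| ≤ L) :
    |∑ j, u j * a j| ≤ ‖u‖ * (Real.sqrt m * L) := by
  set a' : EuclideanSpace ℝ (Fin m) := (EuclideanSpace.equiv (Fin m) ℝ).symm a with ha'
  have h1 : ∑ j, u j * a j = inner ℝ u a' := by
    rw [PiLp.inner_apply]
    simp [ha', RCLike.inner_apply, mul_comm]
  have h2 : ‖a'‖ ≤ Real.sqrt m * L := by
    rw [EuclideanSpace.norm_eq]
    calc Real.sqrt (∑ j, ‖a' j‖^2) ≤ Real.sqrt (∑ _j : Fin m, L^2) := by
          apply Real.sqrt_le_sqrt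
          apply Finset.sum_le_sum
          intro j _
          have : ‖a' j‖ = |a j| := by simp [ha']
          rw [this]
          exact pow_le_pow_left₀ (abs_nonneg _) (ha j) 2
      _ = Real.sqrt m * L := by
          rw [Finset.sum_const, Finset.card_univ, Fintype.card_fin, nsmul_eq_mul,
            Real.sqrt_mul (Nat.cast_nonneg m), Real.sqrt_sq hL]
  calc |∑ j, u j * a j| = |(inner ℝ u a' : ℝ)| := by rw [h1]
    _ ≤ ‖u‖ * ‖a'‖ := abs_real_inner_le_norm u a'
    _ ≤ ‖u‖ * (Real.sqrt m * L) := mul_le_mul_of_nonneg_left h2 (norm_nonneg u)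

lemma PNSP.key {n m : ℕ} (hm : 0 < m) {W V : Set (EuclideanSpace ℝ (Fin m))}
    (hWV : W ⊆ V) (hV : IsBounded V) {δ L : ℝ} (hδ : 0 < δ) (hL : 0 < L)
    (hWδ : ∀ x ∈ W, δ ≤ ‖x‖) {d' : ℝ} (hd'n : d' < n)
    (hdim : lowerMinkDim V < d') :
    volume {A : Fin n → Fin m → ℝ | (∀ i j, |A i j| ≤ L) ∧ ∃ x ∈ W, matVec A x = 0} = 0 := by
  classical
  have hsqm : (0:ℝ) < Real.sqrt m := Real.sqrt_pos.2 (by exact_mod_cast hm)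
  obtain ⟨C, hC1, hC⟩ := PNSP.exists_C (hV.subset hWV)
  have hfreq := PNSP.freq_bound hWV hV hdim
  -- choose the sequence of scales
  have hchoice : ∀ s : ℕ, ∃ ρ : ℝ, 0 < ρ ∧ ρ < 1 ∧ ρ < δ/2 ∧ ρ ≤ 1/(s+1) ∧
      (coveringNumber W ρ : ℝ) ≤ ρ^(-d') := by
    intro s
    have hpos : (0:ℝ) < min (min (δ/2) (1/(s+1:ℝ))) 1 := by
      have : (0:ℝ) < 1/(s+1:ℝ) := by positivity
      have h2 : (0:ℝ) < δ/2 := by linarith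
      simp only [lt_min_iff]
      exact ⟨⟨h2, this⟩, one_pos⟩
    have hmem : Set.Ioo (0:ℝ) (min (min (δ/2) (1/(s+1:ℝ))) 1) ∈ nhdsWithin (0:ℝ) (Set.Ioi 0) :=
      Ioo_mem_nhdsGT_of_mem ⟨le_refl 0, hpos⟩
    obtain ⟨ρ, hρP, hρmem⟩ := (hfreq.and_eventually (eventually_of_mem hmem (fun _ h => h))).exists
    obtain ⟨h0, h1', hN⟩ := hρP
    refine ⟨ρ, h0, h1', ?_, ?_, hN⟩
    · exact lt_of_lt_of_le hρmem.2 ((min_le_left _ _).trans (min_le_left _ _))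
    · exact hρmem.2.le.trans ((min_le_left _ _).trans (min_le_right _ _))
  choose ρs hρ0 hρ1 hρδ hρs hρN using hchoice
  -- choose realizing covers
  have hcov : ∀ s : ℕ, ∃ t : Finset (EuclideanSpace ℝ (Fin m)),
      t.card = coveringNumber W (ρs s) ∧ W ⊆ ⋃ x ∈ t, Metric.ball x (ρs s) := by
    intro s
    have hne := (hC (ρs s) (hρ0 s) (hρ1 s).le).1
    obtain ⟨t, ht1, ht2⟩ := Nat.sInf_mem hne
    exact ⟨t, ht1, ht2⟩
  choose ts hts1 hts2 using hcov
  set ts' : ℕ → Finset (EuclideanSpace ℝ (Fin m)) :=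
    fun s => (ts s).filter (fun c => (Metric.ball c (ρs s) ∩ W).Nonempty) with hts'
  set S : EuclideanSpace ℝ (Fin m) → ℝ → Set (Fin n → Fin m → ℝ) :=
    fun c ρ => {A | ∀ i, |∑ j, c j * A i j| ≤ L * Real.sqrt m * ρ ∧ ∀ j, |A i j| ≤ L} with hS
  set G : ℕ → Set (Fin n → Fin m → ℝ) := fun s => ⋃ c ∈ ts' s, S c (ρs s) with hG
  -- inclusion
  have hsub : {A : Fin n → Fin m → ℝ | (∀ i j, |A i j| ≤ L) ∧ ∃ x ∈ W, matVec A x = 0}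
      ⊆ ⋂ s, G s := by
    rintro A ⟨hAL, x, hxW, hAx⟩
    rw [Set.mem_iInter]
    intro s
    obtain ⟨c, hc, hxc⟩ := Set.mem_iUnion₂.1 (hts2 s hxW)
    have hc' : c ∈ ts' s := Finset.mem_filter.2 ⟨hc, ⟨x, hxc, hxW⟩⟩
    refine Set.mem_iUnion₂.2 ⟨c, hc', ?_⟩
    intro i
    refine ⟨?_, fun j => hAL i j⟩
    have hz : ∑ j, A i j * x j = 0 := (PNSP.matVec_eq_zero_iff A x).1 hAx i
    have heq : ∑ j, c j * A i j = ∑ j, (c - x) j * A i j := by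
      have : ∑ j, x j * A i j = 0 := by
        rw [← hz]; exact Finset.sum_congr rfl fun j _ => mul_comm _ _
      rw [← sub_zero (∑ j, c j * A i j), ← this, ← Finset.sum_sub_distrib]
      apply Finset.sum_congr rfl
      intro j _
      have : (c - x) j = c j - x j := rfl
      rw [this]; ring
    rw [heq]
    calc |∑ j, (c - x) j * A i j| ≤ ‖c - x‖ * (Real.sqrt m * L) :=
          PNSP.cs_bound (c - x) (A i) L hL.le (hAL i)
      _ ≤ ρs s * (Real.sqrt m * L) := by
          apply mul_le_mul_of_nonneg_right ?_ (by positivity)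
          have : dist x c < ρs s := hxc
          rw [← dist_eq_norm]
          rw [dist_comm]
          exact this.le
      _ = L * Real.sqrt m * ρs s := by ring
  -- bound on each G s
  set B : ℝ := (2*Real.sqrt m/δ) * (2*(L*Real.sqrt m)) * (2*L)^(m-1) with hB
  have hB0 : 0 < B := by positivity
  have hGbound : ∀ s, volume (G s) ≤ ENNReal.ofReal (B^n * (ρs s)^((n:ℝ) - d')) := by
    intro s
    have hSbound : ∀ c ∈ ts' s, volume (S c (ρs s)) ≤ (ENNReal.ofReal (B * ρs s))^n := by
      intro c hcmem
      obtain ⟨hcts, hcW⟩ := Finset.mem_filter.1 hcmem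
      obtain ⟨w, hwball, hwW⟩ := hcW
      -- ‖c‖ ≥ δ/2
      have hcnorm : δ/2 ≤ ‖c‖ := by
        have h1 : δ ≤ ‖w‖ := hWδ w hwW
        have h2 : dist w c < ρs s := hwball
        have h3 : ‖w‖ - ‖c‖ ≤ dist w c := by
          rw [dist_eq_norm]
          exact le_trans (le_abs_self _) (abs_norm_sub_norm_le w c)
        have := hρδ s
        linarith
      -- max coordinate
      obtain ⟨j0, _, hj0⟩ := Finset.exists_max_image Finset.univ (fun j => |c j|)
        ⟨⟨0, hm⟩, Finset.mem_univ _⟩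
      have hnormle : ‖c‖ ≤ Real.sqrt m * |c j0| := by
        rw [EuclideanSpace.norm_eq]
        calc Real.sqrt (∑ j, ‖c j‖^2) ≤ Real.sqrt (∑ _j : Fin m, |c j0|^2) := by
              apply Real.sqrt_le_sqrt
              apply Finset.sum_le_sum
              intro j _
              have : ‖c j‖ = |c j| := rfl
              rw [this]
              exact pow_le_pow_left₀ (abs_nonneg _) (hj0 j (Finset.mem_univ j)) 2
          _ = Real.sqrt m * |c j0| := by
              rw [Finset.sum_const, Finset.card_univ, Fintype.card_fin, nsmul_eq_mul,
                Real.sqrt_mul (Nat.cast_nonneg m), Real.sqrt_sq (abs_nonneg _)]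
      have hj0pos : 0 < |c j0| := by nlinarith
      have hj0ne : c j0 ≠ 0 := fun h => by simp [h] at hj0pos
      have hge : δ/(2*Real.sqrt m) ≤ |c j0| := by
        rw [div_le_iff₀ (by positivity)]
        nlinarith
      have hinv : |c j0|⁻¹ ≤ 2*Real.sqrt m/δ := by
        have h7 : (0:ℝ) < δ/(2*Real.sqrt m) := by positivity
        calc |c j0|⁻¹ ≤ (δ/(2*Real.sqrt m))⁻¹ := by
              exact inv_anti₀ h7 hge
          _ = 2*Real.sqrt m/δ := by rw [inv_div]
      calc volume (S c (ρs s))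
          ≤ (ENNReal.ofReal (|c j0|⁻¹) *
            (ENNReal.ofReal (2*(L * Real.sqrt m * ρs s)) * ENNReal.ofReal (2*L) ^ (m - 1))) ^ n :=
            PNSP.mat_measure c j0 hj0ne (L * Real.sqrt m * ρs s) L
        _ ≤ (ENNReal.ofReal (B * ρs s))^n := by
            refine pow_le_pow_left' ?_ n
            have hrw : ENNReal.ofReal (B * ρs s)
                = ENNReal.ofReal (2*Real.sqrt m/δ) * (ENNReal.ofReal (2*(L * Real.sqrt m * ρs s)) * ENNReal.ofReal (2*L) ^ (m - 1)) := by
              rw [← ENNReal.ofReal_pow (by positivity : (0:ℝ) ≤ 2*L),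
                ← ENNReal.ofReal_mul (mul_nonneg (by norm_num) (mul_nonneg (mul_nonneg hL.le hsqm.le) (hρ0 s).le)),
                ← ENNReal.ofReal_mul (by positivity : (0:ℝ) ≤ 2*Real.sqrt m/δ)]
              congr 1
              rw [hB]; ring
            rw [hrw]
            exact mul_le_mul_left (ENNReal.ofReal_le_ofReal hinv) _
    calc volume (G s) ≤ ∑ c ∈ ts' s, volume (S c (ρs s)) := measure_biUnion_finset_le _ _
      _ ≤ (ts' s).card • (ENNReal.ofReal (B * ρs s))^n := Finset.sum_le_card_nsmul _ _ _ hSbound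
      _ ≤ ENNReal.ofReal ((ρs s)^(-d')) * (ENNReal.ofReal (B * ρs s))^n := by
          rw [nsmul_eq_mul]
          apply mul_le_mul_left
          have h1 : ((ts' s).card : ℝ) ≤ (ρs s)^(-d') := by
            calc ((ts' s).card : ℝ) ≤ ((ts s).card : ℝ) := by
                  exact_mod_cast Finset.card_filter_le _ _
              _ = (coveringNumber W (ρs s) : ℝ) := by rw [hts1]
              _ ≤ (ρs s)^(-d') := hρN s
          calc ((ts' s).card : ℝ≥0∞) = ENNReal.ofReal ((ts' s).card : ℝ) := by
                rw [ENNReal.ofReal_natCast]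
            _ ≤ ENNReal.ofReal ((ρs s)^(-d')) := ENNReal.ofReal_le_ofReal h1
      _ = ENNReal.ofReal (B^n * (ρs s)^((n:ℝ) - d')) := by
          rw [← ENNReal.ofReal_pow (mul_pos hB0 (hρ0 s)).le,
            ← ENNReal.ofReal_mul (Real.rpow_pos_of_pos (hρ0 s) _).le]
          congr 1
          have hre : (ρs s)^(-d') * (B * ρs s)^n = B^n * ((ρs s)^((n:ℝ)) * (ρs s)^(-d')) := by
            rw [mul_pow, show (ρs s)^n = (ρs s)^((n:ℝ)) from (Real.rpow_natCast _ n).symm]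
            ring
          rw [hre, ← Real.rpow_add (hρ0 s), ← sub_eq_add_neg]
  -- conclude
  have hμ : ∀ s : ℕ, volume {A : Fin n → Fin m → ℝ | (∀ i j, |A i j| ≤ L) ∧ ∃ x ∈ W, matVec A x = 0}
      ≤ ENNReal.ofReal (B^n * (1/(s+1:ℝ))^((n:ℝ) - d')) := by
    intro s
    calc volume {A : Fin n → Fin m → ℝ | (∀ i j, |A i j| ≤ L) ∧ ∃ x ∈ W, matVec A x = 0}
        ≤ volume (⋂ s, G s) := measure_mono hsub
      _ ≤ volume (G s) := measure_mono (Set.iInter_subset _ s)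
      _ ≤ ENNReal.ofReal (B^n * (ρs s)^((n:ℝ) - d')) := hGbound s
      _ ≤ ENNReal.ofReal (B^n * (1/(s+1:ℝ))^((n:ℝ) - d')) := by
          apply ENNReal.ofReal_le_ofReal
          apply mul_le_mul_of_nonneg_left ?_ (pow_nonneg hB0.le n)
          exact Real.rpow_le_rpow (hρ0 s).le (hρs s) (by linarith)
  have htend : Tendsto (fun s : ℕ => ENNReal.ofReal (B^n * (1/(s+1:ℝ))^((n:ℝ) - d')))
      atTop (nhds 0) := by
    have h1 : Tendsto (fun s : ℕ => B^n * (1/(s+1:ℝ))^((n:ℝ) - d')) atTop (nhds 0) := by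
      have h2 : Tendsto (fun s : ℕ => ((s:ℝ)+1)) atTop atTop :=
        tendsto_atTop_add_const_right _ 1 tendsto_natCast_atTop_atTop
      have h3 : Tendsto (fun x : ℝ => x^((n:ℝ) - d')) atTop atTop :=
        tendsto_rpow_atTop (by linarith)
      have h4 : Tendsto (fun s : ℕ => ((s:ℝ)+1)^((n:ℝ) - d')) atTop atTop := h3.comp h2
      have h5 : Tendsto (fun s : ℕ => (((s:ℝ)+1)^((n:ℝ) - d'))⁻¹) atTop (nhds 0) :=
        h4.inv_tendsto_atTop
      have h6 : (fun s : ℕ => B^n * (1/(s+1:ℝ))^((n:ℝ) - d'))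
          = fun s : ℕ => B^n * (((s:ℝ)+1)^((n:ℝ) - d'))⁻¹ := by
        funext s
        congr 1
        rw [one_div, Real.inv_rpow (by positivity)]
      rw [h6]
      simpa using h5.const_mul (B^n)
    have := (ENNReal.continuous_ofReal.tendsto 0).comp h1
    simpa [Function.comp_def] using this
  have hle := ge_of_tendsto htend (Filter.Eventually.of_forall hμ)
  exact le_antisymm hle zero_le

theorem probabilistic_null_space_property {n m : ℕ} (U : Set (EuclideanSpace ℝ (Fin m)))
    (hne : U.Nonempty) (hdim : lowerModMinkDim U < n) :
    ∀ᵐ A : Fin n → Fin m → ℝ, {x : EuclideanSpace ℝ (Fin m) | matVec A x = 0} ∩ (U \ {0}) = ∅ := by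
  classical
  rcases Nat.eq_zero_or_pos m with hm | hm
  · -- trivial case: the space is a single point
    apply Filter.Eventually.of_forall
    intro A
    ext x
    subst hm
    simp only [Set.mem_inter_iff, Set.mem_setOf_eq, Set.mem_diff, Set.mem_singleton_iff,
      Set.mem_empty_iff_false, iff_false]
    rintro ⟨-, -, hx0⟩
    exact hx0 (Subsingleton.elim x 0)
  -- extract a good cover
  have hSne : {d : ℝ | ∃ V : ℕ → Set (EuclideanSpace ℝ (Fin m)), IsDimCover U V ∧
      d = ⨆ i, lowerMinkDim (V i)}.Nonempty := by
    refine ⟨⨆ i : ℕ, lowerMinkDim (Metric.ball (0 : EuclideanSpace ℝ (Fin m)) ((i:ℝ)+1)),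
      fun i : ℕ => Metric.ball (0 : EuclideanSpace ℝ (Fin m)) ((i:ℝ)+1), ⟨?_, ?_⟩, rfl⟩
    · intro i
      refine ⟨⟨0, Metric.mem_ball_self (by positivity)⟩, isBounded_ball, measurableSet_ball⟩
    · intro x _
      obtain ⟨i, hi⟩ := exists_nat_gt ‖x‖
      refine Set.mem_iUnion.2 ⟨i, ?_⟩
      rw [Metric.mem_ball, dist_zero_right]
      linarith
  have hSbdd : BddBelow {d : ℝ | ∃ V : ℕ → Set (EuclideanSpace ℝ (Fin m)), IsDimCover U V ∧
      d = ⨆ i, lowerMinkDim (V i)} := by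
    refine ⟨0, fun d hd => ?_⟩
    obtain ⟨V, _, rfl⟩ := hd
    exact Real.iSup_nonneg fun i => PNSP.lowerMinkDim_nonneg _
  rw [lowerModMinkDim] at hdim
  obtain ⟨d, ⟨V, hVcov, rfl⟩, hdn⟩ := (csInf_lt_iff hSbdd hSne).1 hdim
  -- each piece has dimension ≤ d
  have hbddA : BddAbove (Set.range fun i => lowerMinkDim (V i)) := by
    refine ⟨(m:ℝ) + 1, ?_⟩
    rintro x ⟨i, rfl⟩
    exact PNSP.lowerMinkDim_le_of_eventually _ (PNSP.eventual_f_le (hVcov.1 i).2.1)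
  have hle : ∀ i, lowerMinkDim (V i) ≤ ⨆ i, lowerMinkDim (V i) := fun i => le_ciSup hbddA i
  set d' : ℝ := ((⨆ i, lowerMinkDim (V i)) + n)/2 with hd'
  have hd'n : d' < n := by rw [hd']; linarith
  have hd'V : ∀ i, lowerMinkDim (V i) < d' := by
    intro i
    have := hle i
    rw [hd']; linarith
  -- bad sets
  set Bad3 : ℕ → ℕ → ℕ → Set (Fin n → Fin m → ℝ) := fun i k R =>
    {A | (∀ i' j', |A i' j'| ≤ (R:ℝ)+1) ∧
      ∃ x ∈ V i ∩ {x : EuclideanSpace ℝ (Fin m) | 1/((k:ℝ)+1) ≤ ‖x‖}, matVec A x = 0} with hBad3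
  have hnull : ∀ i k R, volume (Bad3 i k R) = 0 := by
    intro i k R
    refine PNSP.key hm (Set.inter_subset_left) (hVcov.1 i).2.1
      (by positivity : (0:ℝ) < 1/((k:ℝ)+1)) (by positivity : (0:ℝ) < (R:ℝ)+1)
      (fun x hx => hx.2) hd'n (hd'V i)
  have hsub : {A : Fin n → Fin m → ℝ |
      ¬ ({x : EuclideanSpace ℝ (Fin m) | matVec A x = 0} ∩ (U \ {0}) = ∅)}
      ⊆ ⋃ i, ⋃ k, ⋃ R, Bad3 i k R := by
    intro A hA
    obtain ⟨x, hx0, hxU, hxne⟩ := Set.nonempty_iff_ne_empty.2 hA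
    obtain ⟨i, hi⟩ := Set.mem_iUnion.1 (hVcov.2 hxU)
    have hxpos : 0 < ‖x‖ := by
      rw [norm_pos_iff]
      exact hxne
    obtain ⟨k, hk⟩ := exists_nat_ge (1/‖x‖)
    have hkx : 1/((k:ℝ)+1) ≤ ‖x‖ := by
      rw [div_le_iff₀ (by positivity)]
      have h1 : 1/‖x‖ * ‖x‖ = 1 := by field_simp
      nlinarith
    obtain ⟨Mb, hMb⟩ := Finite.exists_le (fun p : Fin n × Fin m => |A p.1 p.2|)
    obtain ⟨R, hR⟩ := exists_nat_ge Mb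
    refine Set.mem_iUnion.2 ⟨i, Set.mem_iUnion.2 ⟨k, Set.mem_iUnion.2 ⟨R, ?_, x, ⟨hi, hkx⟩, hx0⟩⟩⟩
    intro i' j'
    calc |A i' j'| ≤ Mb := hMb (i', j')
      _ ≤ (R:ℝ) := hR
      _ ≤ (R:ℝ)+1 := by linarith
  rw [ae_iff]
  refine measure_mono_null hsub ?_
  refine measure_iUnion_null fun i => measure_iUnion_null fun k => measure_iUnion_null fun R => hnull i k R
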